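/- Let A be a ring and I a two-sided idempotent ideal of A. Then the following are equivalent: (1) ann_M(I) is a direct summand of M for every right A-module M, and I is finitely generated as a left ideal of A; (2) there exists an idempotent e ∈ A with I = Ae such that, setting B := (1−e)A(1−e) (a ring with identity 1−e) and regarding M := (1−e)Ae as a left B-module via multiplication in A, the character module Hom_ℤ((1−e)Ae, ℚ/ℤ) is hereditary Π-projective as a right B-module. -/

import Mathlib

open MulOpposite

section Corner

variable (A : Type) [Ring A]

/-- The corner ring `fAf = {x : A | f·x·f = x}` attached to an idempotent `f` of `A`;
it is a ring with identity `f`. -/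
def CornerRing (f : A) (_hf : f * f = f) : Type := {x : A // f * x * f = x}

variable {A}

lemma absorb_left {f x : A} (hf : f * f = f) (h : f * x * f = x) : f * x = x := by
  conv_lhs => rw [← h]
  rw [← mul_assoc, ← mul_assoc, hf, h]

lemma absorb_right {f x : A} (hf : f * f = f) (h : f * x * f = x) : x * f = x := by
  conv_lhs => rw [← h]
  rw [mul_assoc, mul_assoc, hf, ← mul_assoc, h]

namespace CornerRing

variable {f : A} {hf : f * f = f}

instance : Add (CornerRing A f hf) := ⟨fun x y => ⟨x.1 + y.1, by rw [mul_add, add_mul, x.2, y.2]⟩⟩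
instance : Zero (CornerRing A f hf) := ⟨⟨0, by rw [mul_zero, zero_mul]⟩⟩
instance : Neg (CornerRing A f hf) := ⟨fun x => ⟨-x.1, by rw [mul_neg, neg_mul, x.2]⟩⟩
instance : Mul (CornerRing A f hf) :=
  ⟨fun x y => ⟨x.1 * y.1, by rw [← mul_assoc, absorb_left hf x.2, mul_assoc,
    absorb_right hf y.2]⟩⟩
instance : One (CornerRing A f hf) := ⟨⟨f, by rw [hf, hf]⟩⟩

instance instRing : Ring (CornerRing A f hf) where
  nsmul := nsmulRec
  zsmul := zsmulRec
  add_assoc x y z := Subtype.ext (add_assoc x.1 y.1 z.1)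
  zero_add x := Subtype.ext (zero_add x.1)
  add_zero x := Subtype.ext (add_zero x.1)
  add_comm x y := Subtype.ext (add_comm x.1 y.1)
  neg_add_cancel x := Subtype.ext (neg_add_cancel x.1)
  mul_assoc x y z := Subtype.ext (mul_assoc x.1 y.1 z.1)
  one_mul x := Subtype.ext (absorb_left hf x.2)
  mul_one x := Subtype.ext (absorb_right hf x.2)
  left_distrib x y z := Subtype.ext (mul_add x.1 y.1 z.1)
  right_distrib x y z := Subtype.ext (add_mul x.1 y.1 z.1)
  zero_mul x := Subtype.ext (zero_mul x.1)
  mul_zero x := Subtype.ext (mul_zero x.1)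

end CornerRing

lemma one_sub_idem {e : A} (he : e * e = e) : (1 - e) * (1 - e) = 1 - e := by
  have h : (1 - e) * (1 - e) = 1 - e - e + e * e := by noncomm_ring
  rw [h, he]; abel

variable (A)

/-- `(1-e)Ae = {x : A | (1-e)·x·e = x}`, which is a left module over the corner ring
`(1-e)A(1-e)`. -/
def LTrap (e : A) (_he : e * e = e) : Type := {x : A // (1 - e) * x * e = x}

variable {A}

namespace LTrap

variable {e : A} {he : e * e = e}

lemma ltrap_left {x : A} (h : (1 - e) * x * e = x) (he : e * e = e) : (1 - e) * x = x := by
  conv_lhs => rw [← h]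
  rw [← mul_assoc, ← mul_assoc, one_sub_idem he, h]

lemma ltrap_right {x : A} (h : (1 - e) * x * e = x) (he : e * e = e) : x * e = x := by
  conv_lhs => rw [← h]
  rw [mul_assoc, mul_assoc, he, ← mul_assoc, h]

instance : Add (LTrap A e he) := ⟨fun x y => ⟨x.1 + y.1, by rw [mul_add, add_mul, x.2, y.2]⟩⟩
instance : Zero (LTrap A e he) := ⟨⟨0, by rw [mul_zero, zero_mul]⟩⟩
instance : Neg (LTrap A e he) := ⟨fun x => ⟨-x.1, by rw [mul_neg, neg_mul, x.2]⟩⟩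

instance instAddCommGroup : AddCommGroup (LTrap A e he) where
  nsmul := nsmulRec
  zsmul := zsmulRec
  add_assoc x y z := Subtype.ext (add_assoc x.1 y.1 z.1)
  zero_add x := Subtype.ext (zero_add x.1)
  add_zero x := Subtype.ext (add_zero x.1)
  add_comm x y := Subtype.ext (add_comm x.1 y.1)
  neg_add_cancel x := Subtype.ext (neg_add_cancel x.1)

instance instSMul : SMul (CornerRing A (1 - e) (one_sub_idem he)) (LTrap A e he) :=
  ⟨fun c x => ⟨c.1 * x.1, by
    rw [← mul_assoc, absorb_left (one_sub_idem he) c.2, mul_assoc, ltrap_right x.2 he]⟩⟩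

instance instMulAction : MulAction (CornerRing A (1 - e) (one_sub_idem he)) (LTrap A e he) where
  one_smul x := Subtype.ext (ltrap_left x.2 he)
  mul_smul c d x := Subtype.ext (mul_assoc c.1 d.1 x.1)

instance instDistribMulAction :
    DistribMulAction (CornerRing A (1 - e) (one_sub_idem he)) (LTrap A e he) where
  smul_zero c := Subtype.ext (mul_zero c.1)
  smul_add c x y := Subtype.ext (mul_add c.1 x.1 y.1)

instance instModule : Module (CornerRing A (1 - e) (one_sub_idem he)) (LTrap A e he) where
  add_smul c d x := Subtype.ext (add_mul c.1 d.1 x.1)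
  zero_smul x := Subtype.ext (zero_mul x.1)

end LTrap

end Corner

section CharMod

variable (B : Type) [Ring B] (M : Type) [AddCommGroup M] [Module B M]

/-- The right `B`-module structure `(f·b)(m) = f(b·m)` on the character module
`M⁺ = Hom_ℤ(M, ℚ/ℤ)` of a left `B`-module `M`. -/
instance charSMul : SMul Bᵐᵒᵖ (CharacterModule M) :=
  ⟨fun b f => f.comp (DistribMulAction.toAddMonoidHom M b.unop)⟩

instance charMulAction : MulAction Bᵐᵒᵖ (CharacterModule M) where
  one_smul f := DFunLike.ext _ _ fun m => by
    show f ((1 : Bᵐᵒᵖ).unop • m) = f m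
    rw [unop_one, one_smul]
  mul_smul b b' f := DFunLike.ext _ _ fun m => by
    show f ((b * b').unop • m) = f (b'.unop • b.unop • m)
    rw [unop_mul, mul_smul]

instance charDistribMulAction : DistribMulAction Bᵐᵒᵖ (CharacterModule M) where
  smul_zero _ := DFunLike.ext _ _ fun _ => rfl
  smul_add _ _ _ := DFunLike.ext _ _ fun _ => rfl

instance charModule : Module Bᵐᵒᵖ (CharacterModule M) where
  add_smul b b' f := DFunLike.ext _ _ fun m => by
    show f ((b + b').unop • m) = f (b.unop • m) + f (b'.unop • m)
    rw [unop_add, add_smul, map_add]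
  zero_smul f := DFunLike.ext _ _ fun m => by
    show f ((0 : Bᵐᵒᵖ).unop • m) = 0
    rw [unop_zero, zero_smul, map_zero]

end CharMod

variable (A : Type) [Ring A]

/-- `ann_M(I) = {m ∈ M | m·a = 0 for all a ∈ I}` as a submodule of the right `A`-module `M`. -/
def rAnn (I : Ideal A) (M : Type) [AddCommGroup M] [Module Aᵐᵒᵖ M] :
    Submodule Aᵐᵒᵖ M where
  carrier := {m : M | ∀ a ∈ I, op a • m = 0}
  add_mem' := by
    intro x y hx hy a ha
    rw [smul_add, hx a ha, hy a ha, add_zero]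
  zero_mem' := by
    intro a _
    rw [smul_zero]
  smul_mem' := by
    intro c m hm a ha
    rw [smul_smul]
    have h1 : op a * c = op (c.unop * a) := by
      rw [op_mul, op_unop]
    rw [h1]
    exact hm (c.unop * a) (I.mul_mem_left c.unop ha)

section Proof10

namespace Stmt10

variable {A : Type} [Ring A]

/-- Elementwise right units: if `ann_M(I)` is a direct summand of every right module,
then every `x ∈ I` satisfies `x = x*s` for some `s ∈ I`. -/
lemma exists_right_unit (I : Ideal A)
    (hright : ∀ a ∈ I, ∀ b : A, a * b ∈ I)
    (hidem : ∀ a ∈ I, a ∈ AddSubgroup.closure {x : A | ∃ b ∈ I, ∃ c ∈ I, x = b * c})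
    (hsum : ∀ (M : Type) [AddCommGroup M] [Module Aᵐᵒᵖ M],
        ∃ N' : Submodule Aᵐᵒᵖ M, rAnn A I M ⊓ N' = ⊥ ∧ rAnn A I M ⊔ N' = ⊤)
    {x : A} (hx : x ∈ I) : ∃ s ∈ I, x = x * s := by
  classical
  let J : Submodule Aᵐᵒᵖ A :=
    { carrier := {m : A | ∃ s ∈ I, m = x * s}
      add_mem' := by
        rintro m₁ m₂ ⟨s₁, hs₁, rfl⟩ ⟨s₂, hs₂, rfl⟩
        exact ⟨s₁ + s₂, I.add_mem hs₁ hs₂, (mul_add x s₁ s₂).symm⟩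
      zero_mem' := ⟨0, I.zero_mem, (mul_zero x).symm⟩
      smul_mem' := by
        rintro c m ⟨s, hs, rfl⟩
        exact ⟨s * c.unop, hright s hs c.unop, mul_assoc x s c.unop⟩ }
  obtain ⟨N', hbot, htop⟩ := hsum (A ⧸ J)
  let mk : A →ₗ[Aᵐᵒᵖ] A ⧸ J := J.mkQ
  have hmem : ∀ m : A, (∃ s ∈ I, m = x * s) → mk m = 0 := by
    intro m hm
    exact (Submodule.Quotient.mk_eq_zero J).2 hm
  have hxann : mk x ∈ rAnn A I (A ⧸ J) := by
    intro a ha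
    have : op a • mk x = mk (x * a) := by
      rw [← map_smul, op_smul_eq_mul]
    rw [this]
    exact hmem _ ⟨a, ha, rfl⟩
  have key : ∀ (m : A ⧸ J), ∀ c ∈ I, op c • m ∈ N' := by
    intro m c hc
    have hm : m ∈ rAnn A I (A ⧸ J) ⊔ N' := htop ▸ Submodule.mem_top
    obtain ⟨u, hu, v, hv, rfl⟩ := Submodule.mem_sup.1 hm
    rw [smul_add, hu c hc, zero_add]
    exact N'.smul_mem _ hv
  have hxN' : mk x ∈ N' := by
    have hle : AddSubgroup.closure {y : A | ∃ b ∈ I, ∃ c ∈ I, y = b * c} ≤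
        N'.toAddSubgroup.comap mk.toAddMonoidHom := by
      refine AddSubgroup.closure_le _ |>.2 ?_
      rintro _ ⟨b, hb, c, hc, rfl⟩
      show mk (b * c) ∈ N'
      have : mk (b * c) = op c • mk b := by
        rw [← map_smul, op_smul_eq_mul]
      rw [this]
      exact key _ c hc
    exact hle (hidem x hx)
  have : mk x ∈ rAnn A I (A ⧸ J) ⊓ N' := ⟨hxann, hxN'⟩
  rw [hbot, Submodule.mem_bot] at this
  obtain ⟨s, hs, hxs⟩ := (Submodule.Quotient.mk_eq_zero J).1 this
  exact ⟨s, hs, hxs⟩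

/-- Common right units for finite lists. -/
lemma list_right_unit (I : Ideal A)
    (hright : ∀ a ∈ I, ∀ b : A, a * b ∈ I)
    (hidem : ∀ a ∈ I, a ∈ AddSubgroup.closure {x : A | ∃ b ∈ I, ∃ c ∈ I, x = b * c})
    (hsum : ∀ (M : Type) [AddCommGroup M] [Module Aᵐᵒᵖ M],
        ∃ N' : Submodule Aᵐᵒᵖ M, rAnn A I M ⊓ N' = ⊥ ∧ rAnn A I M ⊔ N' = ⊤) :
    ∀ (l : List A), (∀ y ∈ l, y ∈ I) → ∃ u ∈ I, ∀ y ∈ l, y * u = y := by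
  intro l
  induction l with
  | nil => exact fun _ => ⟨0, I.zero_mem, fun y hy => absurd hy List.not_mem_nil⟩
  | cons x l ih =>
    intro hmem
    obtain ⟨s, hs, hls⟩ := ih fun y hy => hmem y (List.mem_cons_of_mem x hy)
    have hx : x ∈ I := hmem x List.mem_cons_self
    have hx' : x - x * s ∈ I := I.sub_mem hx (I.mul_mem_left x hs)
    obtain ⟨f, hf, hxf⟩ := exists_right_unit I hright hidem hsum hx'
    refine ⟨s + f - s * f, I.sub_mem (I.add_mem hs hf) (I.mul_mem_left s hf), ?_⟩
    intro y hy
    rcases List.mem_cons.1 hy with rfl | hy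
    · have : (y - y * s) * f = y - y * s := hxf.symm
      calc y * (s + f - s * f) = y * s + (y - y * s) * f := by noncomm_ring
        _ = y * s + (y - y * s) := by rw [this]
        _ = y := by abel
    · have h0 : y - y * s = 0 := by rw [hls y hy, sub_self]
      calc y * (s + f - s * f) = y * s + (y - y * s) * f := by noncomm_ring
        _ = y := by rw [h0, zero_mul, add_zero, hls y hy]

/-- A f.g. idempotent two-sided ideal with the summand property is generated by an
idempotent: `I = Ae`. -/
lemma exists_idem (I : Ideal A)
    (hright : ∀ a ∈ I, ∀ b : A, a * b ∈ I)
    (hidem : ∀ a ∈ I, a ∈ AddSubgroup.closure {x : A | ∃ b ∈ I, ∃ c ∈ I, x = b * c})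
    (hsum : ∀ (M : Type) [AddCommGroup M] [Module Aᵐᵒᵖ M],
        ∃ N' : Submodule Aᵐᵒᵖ M, rAnn A I M ⊓ N' = ⊥ ∧ rAnn A I M ⊔ N' = ⊤)
    (hfg : I.FG) :
    ∃ e : A, e ∈ I ∧ e * e = e ∧ (I : Set A) = {x : A | ∃ a : A, x = a * e} := by
  obtain ⟨S, hS⟩ := hfg
  have hSI : ∀ y ∈ S.toList, y ∈ I := by
    intro y hy
    rw [← hS]
    exact Submodule.subset_span (by simpa using hy)
  obtain ⟨u, hu, hSu⟩ := list_right_unit I hright hidem hsum S.toList hSI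
  have hall : ∀ x ∈ I, x * u = x := by
    intro x hx
    rw [← hS] at hx
    induction hx using Submodule.span_induction with
    | mem y hy => exact hSu y (by simpa using hy)
    | zero => rw [zero_mul]
    | add y z _ _ hy hz => rw [add_mul, hy, hz]
    | smul a y _ hy => rw [smul_eq_mul, mul_assoc, hy]
  refine ⟨u, hu, hall u hu, Set.ext fun x => ⟨fun hx => ⟨x, (hall x hx).symm⟩, ?_⟩⟩
  rintro ⟨a, rfl⟩
  exact I.mul_mem_left a hu

/-! ### Direction (2) ⇒ (1) -/

lemma op_mul_smul' {M : Type} [AddCommGroup M] [Module Aᵐᵒᵖ M] (u v : A) (m : M) :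
    op (u * v) • m = op v • (op u • m) := by
  rw [op_mul, mul_smul]

/-- `Fix M e = M·(1-e)`, the set of elements fixed by the idempotent `1-e`. -/
def Fix (M : Type) [AddCommGroup M] [Module Aᵐᵒᵖ M] (e : A) (_he : e * e = e) : Type :=
  {m : M // op (1 - e) • m = m}

namespace Fix

variable {M : Type} [AddCommGroup M] [Module Aᵐᵒᵖ M] {e : A} {he : e * e = e}

instance : Add (Fix (A := A) M e he) :=
  ⟨fun x y => ⟨x.1 + y.1, by rw [smul_add, x.2, y.2]⟩⟩
instance : Zero (Fix (A := A) M e he) := ⟨⟨0, by rw [smul_zero]⟩⟩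
instance : Neg (Fix (A := A) M e he) := ⟨fun x => ⟨-x.1, by rw [smul_neg, x.2]⟩⟩

instance instAddCommGroup : AddCommGroup (Fix (A := A) M e he) where
  nsmul := nsmulRec
  zsmul := zsmulRec
  add_assoc x y z := Subtype.ext (add_assoc x.1 y.1 z.1)
  zero_add x := Subtype.ext (zero_add x.1)
  add_zero x := Subtype.ext (add_zero x.1)
  add_comm x y := Subtype.ext (add_comm x.1 y.1)
  neg_add_cancel x := Subtype.ext (neg_add_cancel x.1)

@[simp] lemma add_val (x y : Fix (A := A) M e he) : (x + y).1 = x.1 + y.1 := rfl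
@[simp] lemma zero_val : (0 : Fix (A := A) M e he).1 = 0 := rfl
@[simp] lemma neg_val (x : Fix (A := A) M e he) : (-x).1 = -x.1 := rfl

@[simp] lemma sub_val (x y : Fix (A := A) M e he) : (x - y).1 = x.1 - y.1 := by
  have h : x - y = x + -y := sub_eq_add_neg x y
  rw [h, add_val, neg_val, ← sub_eq_add_neg]

instance instSMul : SMul (CornerRing A (1 - e) (one_sub_idem he))ᵐᵒᵖ (Fix (A := A) M e he) :=
  ⟨fun r x => ⟨op r.unop.1 • x.1, by
    rw [← mul_smul, ← op_mul, absorb_right (one_sub_idem he) r.unop.2]⟩⟩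

@[simp] lemma smul_val (r : (CornerRing A (1 - e) (one_sub_idem he))ᵐᵒᵖ)
    (x : Fix (A := A) M e he) :
    (r • x).1 = op r.unop.1 • x.1 := rfl

instance instMulAction :
    MulAction (CornerRing A (1 - e) (one_sub_idem he))ᵐᵒᵖ (Fix (A := A) M e he) where
  one_smul x := Subtype.ext <| by
    show op ((1 : (CornerRing A (1-e) (one_sub_idem he))ᵐᵒᵖ)).unop.1 • x.1 = x.1
    exact x.2
  mul_smul r s x := Subtype.ext <| by
    show op ((r * s).unop).1 • x.1 = op r.unop.1 • (op s.unop.1 • x.1)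
    rw [← op_mul_smul']
    rfl

instance instDistribMulAction :
    DistribMulAction (CornerRing A (1 - e) (one_sub_idem he))ᵐᵒᵖ (Fix (A := A) M e he) where
  smul_zero r := Subtype.ext <| by show op r.unop.1 • (0 : M) = 0; rw [smul_zero]
  smul_add r x y := Subtype.ext <| by
    show op r.unop.1 • (x.1 + y.1) = op r.unop.1 • x.1 + op r.unop.1 • y.1
    rw [smul_add]

instance instModule :
    Module (CornerRing A (1 - e) (one_sub_idem he))ᵐᵒᵖ (Fix (A := A) M e he) where
  add_smul r s x := Subtype.ext <| by
    show op ((r + s).unop).1 • x.1 = op r.unop.1 • x.1 + op s.unop.1 • x.1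
    have h0 : ((r + s).unop).1 = r.unop.1 + s.unop.1 := rfl
    rw [h0, op_add, add_smul]
  zero_smul x := Subtype.ext <| by
    show op ((0 : (CornerRing A (1-e) (one_sub_idem he))ᵐᵒᵖ)).unop.1 • x.1 = 0
    have h0 : ((0 : (CornerRing A (1-e) (one_sub_idem he))ᵐᵒᵖ)).unop.1 = (0 : A) := rfl
    rw [h0, op_zero, zero_smul]

end Fix

/-- The pairing of `M·(1-e)` with characters of `M` against the trap `(1-e)Ae`. -/
def gchar {M : Type} [AddCommGroup M] [Module Aᵐᵒᵖ M] {e : A} (he : e * e = e)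
    (χ : CharacterModule M) :
    Fix (A := A) M e he →ₗ[(CornerRing A (1 - e) (one_sub_idem he))ᵐᵒᵖ]
      CharacterModule (LTrap A e he) where
  toFun x :=
    { toFun := fun t => χ (op t.1 • x.1)
      map_zero' := by
        show χ (op (0 : LTrap A e he).1 • x.1) = 0
        rw [show ((0 : LTrap A e he)).1 = (0:A) from rfl, op_zero, zero_smul, map_zero]
      map_add' := fun t t' => by
        show χ (op (t + t').1 • x.1) = χ (op t.1 • x.1) + χ (op t'.1 • x.1)
        rw [show ((t + t')).1 = t.1 + t'.1 from rfl, op_add, add_smul, map_add] }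
  map_add' x y := by
    ext t
    show χ (op t.1 • (x + y).1) = _
    rw [Fix.add_val, smul_add, map_add]
    rfl
  map_smul' r x := by
    ext t
    show χ (op t.1 • (op r.unop.1 • x.1)) = χ (op (r.unop • t).1 • x.1)
    rw [← op_mul_smul']
    rfl

/-- The canonical map from `M(1-e)` into a product of copies of `((1-e)Ae)⁺`. -/
def PhiMap {M : Type} [AddCommGroup M] [Module Aᵐᵒᵖ M] {e : A} (he : e * e = e) :
    Fix (A := A) M e he →ₗ[(CornerRing A (1 - e) (one_sub_idem he))ᵐᵒᵖ]
      (CharacterModule M → CharacterModule (LTrap A e he)) :=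
  LinearMap.pi fun χ => gchar he χ

lemma PhiMap_eq_zero_iff {M : Type} [AddCommGroup M] [Module Aᵐᵒᵖ M] {e : A}
    (he : e * e = e) (x : Fix (A := A) M e he) :
    PhiMap (A := A) he x = 0 ↔ ∀ t : LTrap A e he, op t.1 • x.1 = 0 := by
  constructor
  · intro h t
    by_contra hne
    obtain ⟨χ, hχ⟩ := CharacterModule.exists_character_apply_ne_zero_of_ne_zero hne
    have : (PhiMap (A := A) he x) χ = 0 := by rw [h]; rfl
    have : χ (op t.1 • x.1) = 0 := by
      have h2 := congrArg (fun (f : CharacterModule (LTrap A e he)) => f t) this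
      exact h2
    exact hχ this
  · intro h
    funext χ
    ext t
    show χ (op t.1 • x.1) = 0
    rw [h t, map_zero]

set_option maxHeartbeats 1000000 in
lemma summand_of_proj (e : A) (he : e * e = e)
    (htwo : ∀ a : A, e * a * e = e * a)
    (I : Ideal A) (hIset : (I : Set A) = {x : A | ∃ a : A, x = a * e})
    (hproj : ∀ (ι : Type)
        (N : Submodule (CornerRing A (1 - e) (one_sub_idem he))ᵐᵒᵖ
          (ι → CharacterModule (LTrap A e he))),
        Module.Projective (CornerRing A (1 - e) (one_sub_idem he))ᵐᵒᵖ N)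
    (M : Type) [AddCommGroup M] [Module Aᵐᵒᵖ M] :
    ∃ N' : Submodule Aᵐᵒᵖ M, rAnn A I M ⊓ N' = ⊥ ∧ rAnn A I M ⊔ N' = ⊤ := by
  classical
  have he_mem : e ∈ I := by
    have : e ∈ (I : Set A) := by rw [hIset]; exact ⟨1, (one_mul e).symm⟩
    exact this
  -- membership in I is multiples of e
  have hI_iff : ∀ s : A, s ∈ I ↔ ∃ a : A, s = a * e := by
    intro s
    constructor
    · intro hs; have : s ∈ (I : Set A) := hs; rwa [hIset] at this
    · rintro ⟨a, rfl⟩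
      have : a * e ∈ (I : Set A) := by rw [hIset]; exact ⟨a, rfl⟩
      exact this
  -- the key kernel characterisation
  have hker_iff : ∀ x : Fix (A := A) M e he,
      PhiMap (A := A) he x = 0 ↔ x.1 ∈ rAnn A I M := by
    intro x
    rw [PhiMap_eq_zero_iff]
    constructor
    · intro h s hs
      obtain ⟨a, rfl⟩ := (hI_iff s).1 hs
      have hx : op (a * e) • x.1 = op ((1 - e) * (a * e)) • x.1 := by
        conv_lhs => rw [← x.2, ← op_mul_smul']
      have hT : (1 - e) * ((1 - e) * (a * e)) * e = (1 - e) * (a * e) := by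
        have h1 : (1 - e) * ((1 - e) * (a * e)) * e = ((1-e)*(1-e)) * a * (e * e) := by
          noncomm_ring
        rw [h1, one_sub_idem he, he]
        noncomm_ring
      rw [hx]
      exact h ⟨(1 - e) * (a * e), hT⟩
    · intro hx t
      have ht : t.1 ∈ I := by
        rw [hI_iff]
        exact ⟨(1 - e) * t.1, t.2.symm⟩
      exact hx t.1 ht
  -- apply the projectivity hypothesis to the image of `PhiMap`
  set Φ := PhiMap (A := A) (M := M) he with hΦdef
  have hp := hproj (CharacterModule M) (LinearMap.range Φ)
  obtain ⟨s, hsec⟩ := Module.projective_lifting_property Φ.rangeRestrict LinearMap.id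
    Φ.surjective_rangeRestrict
  have hΦs : ∀ n, Φ (s n) = n.1 := by
    intro n
    have h1 : Φ.rangeRestrict (s n) = n := LinearMap.congr_fun hsec n
    exact congrArg Subtype.val h1
  -- the complement inside M
  refine ⟨{ carrier := {m : M | ∃ m₀ : M, ∃ x' : Fix (A := A) M e he,
              x' ∈ LinearMap.range s ∧ m = op e • m₀ + x'.1}
            add_mem' := ?_
            zero_mem' := ⟨0, 0, Submodule.zero_mem _, by rw [smul_zero, Fix.zero_val, add_zero]⟩
            smul_mem' := ?_ }, ?_, ?_⟩
  · rintro m₁ m₂ ⟨n₁, x₁, hx₁, rfl⟩ ⟨n₂, x₂, hx₂, rfl⟩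
    refine ⟨n₁ + n₂, x₁ + x₂, Submodule.add_mem _ hx₁ hx₂, ?_⟩
    rw [smul_add, Fix.add_val]
    abel
  · rintro c m ⟨m₀, x', hx', rfl⟩
    set a := c.unop with ha
    have hc : c = op a := rfl
    have hsplit : a = a * e + a * (1 - e) := by noncomm_ring
    have h1 : c • (op e • m₀) = op e • (op (e * a) • m₀) := by
      rw [hc, ← mul_smul, ← op_mul]
      have : e * a = (e * a) * e := (htwo a).symm
      conv_lhs => rw [this, op_mul_smul']
    have h2 : op (a * e) • x'.1 = op e • (op a • x'.1) := op_mul_smul' a e x'.1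
    have hb : (1 - e) * ((1-e) * a * (1-e)) * (1 - e) = (1-e) * a * (1-e) := by
      have : (1 - e) * ((1-e) * a * (1-e)) * (1 - e)
          = ((1-e)*(1-e)) * a * ((1-e)*(1-e)) := by noncomm_ring
      rw [this, one_sub_idem he]
    set rb : (CornerRing A (1 - e) (one_sub_idem he))ᵐᵒᵖ := op ⟨(1-e) * a * (1-e), hb⟩
      with hrb
    have h3 : op (a * (1 - e)) • x'.1 = (rb • x').1 := by
      rw [Fix.smul_val]
      show op (a * (1-e)) • x'.1 = op ((1-e) * a * (1-e)) • x'.1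
      conv_lhs => rw [← x'.2, ← op_mul_smul']
      rw [show (1-e) * (a * (1-e)) = (1-e) * a * (1-e) from (mul_assoc _ _ _).symm]
    have h4 : c • x'.1 = op e • (op a • x'.1) + (rb • x').1 := by
      rw [hc]
      conv_lhs => rw [show (a : A) = a * e + a * (1 - e) from hsplit]
      rw [op_add, add_smul, h2, h3]
    refine ⟨op (e * a) • m₀ + op a • x'.1, rb • x', Submodule.smul_mem _ _ hx', ?_⟩
    rw [smul_add, h1, h4, smul_add]
    abel
  · -- intersection is trivial
    rw [Submodule.eq_bot_iff]
    rintro m ⟨hann, m₀, x', hx', rfl⟩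
    have hz : op e • (op e • m₀ + x'.1) = 0 := hann e he_mem
    have hm1 : op e • m₀ + x'.1 = op (1 - e) • (op e • m₀ + x'.1) := by
      have h2 : op (1 - e) • (op e • m₀ + x'.1) + op e • (op e • m₀ + x'.1)
          = op e • m₀ + x'.1 := by
        rw [← add_smul, ← op_add, show (1 : A) - e + e = 1 by abel, op_one, one_smul]
      calc op e • m₀ + x'.1
          = op (1 - e) • (op e • m₀ + x'.1) + op e • (op e • m₀ + x'.1) := h2.symm
        _ = op (1 - e) • (op e • m₀ + x'.1) := by rw [hz, add_zero]
    have hm2 : op (1 - e) • (op e • m₀ + x'.1) = x'.1 := by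
      rw [smul_add, x'.2, ← mul_smul, ← op_mul]
      have : e * (1 - e) = 0 := by rw [mul_sub, mul_one, he, sub_self]
      rw [this, op_zero, zero_smul, zero_add]
    have hmx : op e • m₀ + x'.1 = x'.1 := by rw [hm1, hm2]
    have hxann : x'.1 ∈ rAnn A I M := hmx ▸ hann
    have hΦx : Φ x' = 0 := (hker_iff x').2 hxann
    obtain ⟨n, rfl⟩ := hx'
    have hrr0 : Φ.rangeRestrict (s n) = 0 := by
      apply Subtype.ext
      show Φ (s n) = 0
      exact hΦx
    have hn : n = 0 := by
      have h5 : Φ.rangeRestrict (s n) = n := LinearMap.congr_fun hsec n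
      rw [← h5, hrr0]
    rw [hmx, hn, map_zero, Fix.zero_val]
  · -- sum is everything
    rw [Submodule.eq_top_iff']
    intro m
    have hidem1 : op (1 - e) • (op (1 - e) • m) = op (1 - e) • m := by
      rw [← mul_smul, ← op_mul, one_sub_idem he]
    set xm : Fix (A := A) M e he := ⟨op (1 - e) • m, hidem1⟩ with hxm
    set x'' : Fix (A := A) M e he := s (Φ.rangeRestrict xm) with hx''
    have hkΦ : Φ (xm - x'') = 0 := by
      rw [map_sub, hx'', hΦs]
      show Φ xm - Φ xm = 0
      rw [sub_self]
    have hkann : (xm - x'').1 ∈ rAnn A I M := (hker_iff _).1 hkΦ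
    have hdecomp : m = (xm - x'').1 + (op e • m + x''.1) := by
      rw [Fix.sub_val, hxm]
      show m = (op (1-e) • m - x''.1) + (op e • m + x''.1)
      have habc : ∀ (a b c : M), (a - b) + (c + b) = a + c := fun a b c => by abel
      rw [habc]
      rw [← add_smul, ← op_add, show (1 : A) - e + e = 1 by abel, op_one, one_smul]
    rw [Submodule.mem_sup]
    exact ⟨(xm - x'').1, hkann, op e • m + x''.1,
      ⟨m, x'', ⟨Φ.rangeRestrict xm, rfl⟩, rfl⟩, hdecomp.symm⟩

/-! ### Direction (1) ⇒ (2): projectivity of submodules of products -/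

section Big

variable {e : A} (he : e * e = e)

/-- Corner component `(1-e)·a·(1-e)`. -/
def beta (a : A) : CornerRing A (1 - e) (one_sub_idem he) :=
  ⟨(1 - e) * a * (1 - e), by
    have h : (1-e) * ((1-e) * a * (1-e)) * (1-e) = ((1-e)*(1-e)) * a * ((1-e)*(1-e)) := by
      noncomm_ring
    rw [h, one_sub_idem he]⟩

/-- Corner component `e·a·e`. -/
def gammaC (a : A) : CornerRing A e he :=
  ⟨e * a * e, by
    have h : e * (e * a * e) * e = (e*e) * a * (e*e) := by noncomm_ring
    rw [h, he]⟩

/-- Trap component `(1-e)·a·e`. -/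
def tauT (a : A) : LTrap A e he :=
  ⟨(1 - e) * a * e, by
    have h : (1-e) * ((1-e) * a * e) * e = ((1-e)*(1-e)) * a * (e*e) := by noncomm_ring
    rw [h, one_sub_idem he, he]⟩

@[simp] lemma beta_val (a : A) : (beta he a).1 = (1 - e) * a * (1 - e) := rfl
@[simp] lemma gammaC_val (a : A) : (gammaC he a).1 = e * a * e := rfl
@[simp] lemma tauT_val (a : A) : (tauT he a).1 = (1 - e) * a * e := rfl

lemma e_mul_one_sub (h : e * e = e) : e * (1 - e) = 0 := by
  rw [mul_sub, mul_one, h, sub_self]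
lemma one_sub_mul_e (h : e * e = e) : (1 - e) * e = 0 := by
  rw [sub_mul, one_mul, h, sub_self]

lemma beta_one : beta he 1 = 1 := Subtype.ext <| by
  show (1 - e) * 1 * (1 - e) = 1 - e
  rw [mul_one, one_sub_idem he]

lemma beta_zero : beta he 0 = 0 := Subtype.ext <| by
  show (1 - e) * 0 * (1 - e) = 0
  rw [mul_zero, zero_mul]

lemma beta_add (a a' : A) : beta he (a + a') = beta he a + beta he a' :=
  Subtype.ext <| by show (1-e) * (a + a') * (1-e) = (1-e)*a*(1-e) + (1-e)*a'*(1-e); noncomm_ring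

lemma beta_mul (htwo : ∀ a : A, e * a * e = e * a) (a a' : A) :
    beta he (a * a') = beta he a * beta he a' := Subtype.ext <| by
  show (1-e) * (a * a') * (1-e) = ((1-e)*a*(1-e)) * ((1-e)*a'*(1-e))
  have hz : e * (a' * (1 - e)) = 0 := by
    rw [← mul_assoc, mul_sub, mul_one, htwo a', sub_self]
  have h1 : ((1-e)*a*(1-e)) * ((1-e)*a'*(1-e)) = (1-e)*a*(((1-e)*(1-e)) * (a'*(1-e))) := by
    noncomm_ring
  rw [h1, one_sub_idem he]
  have h2 : (1-e)*a*((1-e) * (a'*(1-e))) = (1-e)*(a*a')*(1-e) - (1-e)*a*(e*(a'*(1-e))) := by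
    noncomm_ring
  rw [h2, hz, mul_zero, sub_zero]

lemma gammaC_one : gammaC he 1 = 1 := Subtype.ext <| by
  show e * 1 * e = e
  rw [mul_one, he]

lemma gammaC_zero : gammaC he 0 = 0 := Subtype.ext <| by
  show e * 0 * e = 0
  rw [mul_zero, zero_mul]

lemma gammaC_add (a a' : A) : gammaC he (a + a') = gammaC he a + gammaC he a' :=
  Subtype.ext <| by show e * (a + a') * e = e*a*e + e*a'*e; noncomm_ring

lemma gammaC_mul (htwo : ∀ a : A, e * a * e = e * a) (a a' : A) :
    gammaC he (a * a') = gammaC he a * gammaC he a' := Subtype.ext <| by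
  show e * (a * a') * e = (e*a*e) * (e*a'*e)
  have hz : e * a * (1 - e) = 0 := by rw [mul_sub, mul_one, htwo a, sub_self]
  have h1 : (e*a*e) * (e*a'*e) = e*a*((e*e) * (a'*e)) := by noncomm_ring
  rw [h1, he]
  have h2 : e*a*(e * (a'*e)) = e*(a*a')*e - (e*a*(1-e))*(a'*e) := by noncomm_ring
  rw [h2, hz, zero_mul, sub_zero]

lemma tauT_one : tauT he 1 = 0 := Subtype.ext <| by
  show (1 - e) * 1 * e = 0
  rw [mul_one, one_sub_mul_e he]

lemma tauT_zero : tauT he 0 = 0 := Subtype.ext <| by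
  show (1 - e) * 0 * e = 0
  rw [mul_zero, zero_mul]

lemma tauT_add (a a' : A) : tauT he (a + a') = tauT he a + tauT he a' :=
  Subtype.ext <| by show (1-e) * (a + a') * e = (1-e)*a*e + (1-e)*a'*e; noncomm_ring

/-- Peirce decomposition of a product in the trap component. -/
lemma tauT_mul_val (h : e * e = e) (a a' : A) :
    (1-e) * (a' * a) * e = ((1-e)*a'*e) * (e*a*e) + ((1-e)*a'*(1-e)) * ((1-e)*a*e) := by
  have h1 : ((1-e)*a'*e) * (e*a*e) + ((1-e)*a'*(1-e)) * ((1-e)*a*e)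
      = (1-e)*a'*((e*e) * (a*e)) + (1-e)*a'*(((1-e)*(1-e)) * (a*e)) := by noncomm_ring
  rw [h1, h, one_sub_idem h]
  noncomm_ring

lemma beta_ae (a : A) : beta he (a * e) = 0 := Subtype.ext <| by
  show (1-e) * (a * e) * (1-e) = 0
  have h : (1-e) * (a * e) * (1-e) = (1-e) * a * (e * (1-e)) := by noncomm_ring
  rw [h, e_mul_one_sub he, mul_zero]

lemma gammaC_ae (a : A) : gammaC he (a * e) = gammaC he a := Subtype.ext <| by
  show e * (a * e) * e = e * a * e
  have h : e * (a * e) * e = e * a * (e * e) := by noncomm_ring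
  rw [h, he]

lemma tauT_ae (a : A) : tauT he (a * e) = tauT he a := Subtype.ext <| by
  show (1-e) * (a * e) * e = (1-e) * a * e
  have h : (1-e) * (a * e) * e = (1-e) * a * (e * e) := by noncomm_ring
  rw [h, he]

lemma gammaC_e : gammaC he e = 1 := Subtype.ext <| by
  show e * e * e = e
  rw [he, he]

lemma tauT_e : tauT he e = 0 := Subtype.ext <| by
  show (1-e) * e * e = 0
  rw [one_sub_mul_e he, zero_mul]

lemma beta_corner (b : CornerRing A (1 - e) (one_sub_idem he)) : beta he b.1 = b :=
  Subtype.ext b.2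

lemma tauT_corner (b : CornerRing A (1 - e) (one_sub_idem he)) : tauT he b.1 = 0 :=
  Subtype.ext <| by
    show (1-e) * b.1 * e = 0
    conv_lhs => rw [← b.2]
    have h : (1-e) * ((1-e) * b.1 * (1-e)) * e = ((1-e)*(1-e)) * b.1 * ((1-e) * e) := by
      noncomm_ring
    rw [h, one_sub_mul_e he, mul_zero]

lemma gammaC_corner (b : CornerRing A (1 - e) (one_sub_idem he)) : gammaC he b.1 = 0 :=
  Subtype.ext <| by
    show e * b.1 * e = 0
    conv_lhs => rw [← b.2]
    have h : e * ((1-e) * b.1 * (1-e)) * e = (e*(1-e)) * b.1 * ((1-e) * e) := by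
      noncomm_ring
    rw [h, e_mul_one_sub he, zero_mul, zero_mul]

lemma tauT_trap (t : LTrap A e he) : tauT he t.1 = t := Subtype.ext t.2

/-- Right multiplication of a trap element by a corner element stays in the trap. -/
def tmul (t : LTrap A e he) : CornerRing A e he →+ LTrap A e he where
  toFun z := ⟨t.1 * z.1, by
    have h1 : (1-e) * t.1 = t.1 := LTrap.ltrap_left t.2 he
    have h2 : z.1 * e = z.1 := absorb_right he z.2
    calc (1-e) * (t.1 * z.1) * e = ((1-e) * t.1) * (z.1 * e) := by noncomm_ring
      _ = t.1 * z.1 := by rw [h1, h2]⟩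
  map_zero' := Subtype.ext <| by show t.1 * (0 : CornerRing A e he).1 = 0; rw [show ((0 : CornerRing A e he)).1 = (0:A) from rfl, mul_zero]
  map_add' z z' := Subtype.ext <| by
    show t.1 * (z + z').1 = t.1 * z.1 + t.1 * z'.1
    rw [show ((z + z')).1 = z.1 + z'.1 from rfl, mul_add]

@[simp] lemma tmul_val (t : LTrap A e he) (z : CornerRing A e he) :
    (tmul he t z).1 = t.1 * z.1 := rfl

lemma tmul_zero_left (z : CornerRing A e he) : tmul he 0 z = 0 :=
  Subtype.ext <| by
    show ((0 : LTrap A e he)).1 * z.1 = 0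
    rw [show ((0 : LTrap A e he)).1 = (0:A) from rfl, zero_mul]

lemma tmul_add_left (t t' : LTrap A e he) (z : CornerRing A e he) :
    tmul he (t + t') z = tmul he t z + tmul he t' z :=
  Subtype.ext <| by
    show (t + t').1 * z.1 = t.1 * z.1 + t'.1 * z.1
    rw [show ((t + t')).1 = t.1 + t'.1 from rfl, add_mul]

end Big

section BigMod

variable {e : A} (he : e * e = e) (htwo : ∀ a : A, e * a * e = e * a)
variable (ι : Type)
variable (N : Submodule (CornerRing A (1 - e) (one_sub_idem he))ᵐᵒᵖ
    (ι → CharacterModule (LTrap A e he)))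

/-- The canonical map from the free module on `N` to the ambient product. -/
noncomputable def hmapBig :
    (↥N →₀ (CornerRing A (1 - e) (one_sub_idem he))ᵐᵒᵖ)
      →ₗ[(CornerRing A (1 - e) (one_sub_idem he))ᵐᵒᵖ]
    (ι → CharacterModule (LTrap A e he)) :=
  N.subtype.comp (Finsupp.linearCombination _ id)

/-- The auxiliary right `A`-module `F × (ι → C⁺)` used to test the summand property. -/
def BigMod (_htwo : ∀ a : A, e * a * e = e * a) : Type :=
  (↥N →₀ (CornerRing A (1 - e) (one_sub_idem he))ᵐᵒᵖ) ×
    (ι → CharacterModule (CornerRing A e he))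

namespace BigMod

noncomputable instance instAddCommGroup : AddCommGroup (BigMod he ι N htwo) :=
  inferInstanceAs (AddCommGroup
    ((↥N →₀ (CornerRing A (1 - e) (one_sub_idem he))ᵐᵒᵖ) ×
      (ι → CharacterModule (CornerRing A e he))))

/-- Constructor for `BigMod` avoiding type-ascription unfolding. -/
def mk (x : ↥N →₀ (CornerRing A (1 - e) (one_sub_idem he))ᵐᵒᵖ)
    (y : ι → CharacterModule (CornerRing A e he)) : BigMod he ι N htwo := (x, y)

noncomputable instance instSMul : SMul Aᵐᵒᵖ (BigMod he ι N htwo) :=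
  ⟨fun r m =>
    (op (beta he r.unop) • m.1,
     fun i => (m.2 i).comp (AddMonoidHom.mulLeft (gammaC he r.unop)) +
       (hmapBig he ι N m.1 i).comp (tmul he (tauT he r.unop)))⟩

lemma smul_fst (r : Aᵐᵒᵖ) (m : BigMod he ι N htwo) :
    (r • m).1 = op (beta he r.unop) • m.1 := rfl

lemma smul_snd (r : Aᵐᵒᵖ) (m : BigMod he ι N htwo) (i : ι)
    (z : CornerRing A e he) :
    (r • m).2 i z = (m.2 i) (gammaC he r.unop * z) +
      (hmapBig he ι N m.1 i) (tmul he (tauT he r.unop) z) := rfl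

lemma add_fst (m m' : BigMod he ι N htwo) : (m + m').1 = m.1 + m'.1 := rfl
lemma add_snd (m m' : BigMod he ι N htwo) : (m + m').2 = m.2 + m'.2 := rfl
lemma zero_fst : ((0 : BigMod he ι N htwo)).1 = 0 := rfl
lemma zero_snd : ((0 : BigMod he ι N htwo)).2 = 0 := rfl

lemma charZero_apply {G : Type} [AddCommGroup G] (x : G) :
    (0 : CharacterModule G) x = 0 := rfl

set_option maxHeartbeats 1600000 in
noncomputable instance instMulAction : MulAction Aᵐᵒᵖ (BigMod he ι N htwo) where
  one_smul m := by
    refine Prod.ext ?_ ?_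
    · rw [smul_fst]
      show op (beta he (1 : A)) • m.1 = m.1
      rw [beta_one he, op_one, one_smul]
    · funext i
      ext z
      rw [smul_snd]
      show m.2 i (gammaC he (1 : A) * z) + (hmapBig he ι N m.1 i) (tmul he (tauT he (1 : A)) z)
          = m.2 i z
      rw [gammaC_one he, one_mul, tauT_one he, tmul_zero_left he, map_zero, add_zero]
  mul_smul r s m := by
    refine Prod.ext ?_ ?_
    · rw [smul_fst, smul_fst, smul_fst]
      show op (beta he ((r * s).unop)) • m.1
          = op (beta he r.unop) • (op (beta he s.unop) • m.1)
      rw [show ((r * s)).unop = s.unop * r.unop from rfl, beta_mul he htwo, op_mul, mul_smul]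
    · funext i
      ext z
      set a := r.unop with ha
      set a' := s.unop with ha'
      have hru : ((r * s)).unop = a' * a := rfl
      have hsm : hmapBig he ι N (op (beta he a') • m.1) i
          = (hmapBig he ι N m.1 i).comp
              (DistribMulAction.toAddMonoidHom (LTrap A e he) (beta he a')) := by
        have h1 : hmapBig he ι N (op (beta he a') • m.1)
            = op (beta he a') • hmapBig he ι N m.1 := map_smul _ _ _
        calc hmapBig he ι N (op (beta he a') • m.1) i
            = (op (beta he a') • hmapBig he ι N m.1) i := by rw [h1]
          _ = _ := rfl
      rw [smul_snd, smul_snd, smul_snd, smul_fst, hsm, hru]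
      show m.2 i (gammaC he (a' * a) * z)
            + hmapBig he ι N m.1 i (tmul he (tauT he (a' * a)) z)
          = (m.2 i (gammaC he a' * (gammaC he a * z))
              + hmapBig he ι N m.1 i (tmul he (tauT he a') (gammaC he a * z)))
            + hmapBig he ι N m.1 i (beta he a' • tmul he (tauT he a) z)
      have hγ : gammaC he (a' * a) * z = gammaC he a' * (gammaC he a * z) := by
        rw [gammaC_mul he htwo, mul_assoc]
      have hτ : tmul he (tauT he (a' * a)) z
          = tmul he (tauT he a') (gammaC he a * z) + beta he a' • tmul he (tauT he a) z := by
        apply Subtype.ext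
        show (1-e) * (a' * a) * e * z.1
            = ((1-e)*a'*e) * ((e*a*e) * z.1) + ((1-e)*a'*(1-e)) * (((1-e)*a*e) * z.1)
        rw [tauT_mul_val he a a']
        noncomm_ring
      rw [hγ, hτ, map_add]
      abel

set_option maxHeartbeats 1600000 in
noncomputable instance instDistribMulAction :
    DistribMulAction Aᵐᵒᵖ (BigMod he ι N htwo) where
  smul_zero r := by
    refine Prod.ext ?_ ?_
    · rw [smul_fst, zero_fst]
      exact smul_zero _
    · funext i
      ext z
      rw [smul_snd, zero_fst, zero_snd, map_zero]
      show (0 : CharacterModule (CornerRing A e he)) (gammaC he r.unop * z)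
          + ((0 : ι → CharacterModule (LTrap A e he)) i) (tmul he (tauT he r.unop) z)
          = (0 : CharacterModule (CornerRing A e he)) z
      rw [show ((0 : ι → CharacterModule (LTrap A e he)) i) = 0 from rfl,
        charZero_apply, charZero_apply, charZero_apply, add_zero]
  smul_add r m m' := by
    refine Prod.ext ?_ ?_
    · rw [smul_fst, add_fst, add_fst, smul_fst, smul_fst, smul_add]
    · funext i
      ext z
      rw [add_snd, smul_snd]
      show (m.2 + m'.2) i (gammaC he r.unop * z)
          + hmapBig he ι N (m + m').1 i (tmul he (tauT he r.unop) z) = _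
      rw [add_fst, map_add]
      show (m.2 i) (gammaC he r.unop * z) + (m'.2 i) (gammaC he r.unop * z)
          + ((hmapBig he ι N m.1 + hmapBig he ι N m'.1) i) (tmul he (tauT he r.unop) z)
          = ((r • m).2 + (r • m').2) i z
      rw [show ((hmapBig he ι N m.1 + hmapBig he ι N m'.1) i)
          = hmapBig he ι N m.1 i + hmapBig he ι N m'.1 i from rfl]
      show _ = (r • m).2 i z + (r • m').2 i z
      rw [smul_snd, smul_snd]
      show _ = (m.2 i (gammaC he r.unop * z) + hmapBig he ι N m.1 i (tmul he (tauT he r.unop) z))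
          + (m'.2 i (gammaC he r.unop * z) + hmapBig he ι N m'.1 i (tmul he (tauT he r.unop) z))
      rw [show (hmapBig he ι N m.1 i + hmapBig he ι N m'.1 i) (tmul he (tauT he r.unop) z)
          = hmapBig he ι N m.1 i (tmul he (tauT he r.unop) z)
            + hmapBig he ι N m'.1 i (tmul he (tauT he r.unop) z) from rfl]
      abel

set_option maxHeartbeats 1600000 in
noncomputable instance instModule : Module Aᵐᵒᵖ (BigMod he ι N htwo) where
  add_smul r s m := by
    refine Prod.ext ?_ ?_
    · rw [smul_fst]
      show op (beta he ((r + s).unop)) • m.1 = ((r • m) + (s • m)).1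
      rw [add_fst, smul_fst, smul_fst,
        show ((r + s)).unop = r.unop + s.unop from rfl, beta_add he, op_add, add_smul]
    · funext i
      ext z
      rw [smul_snd]
      show m.2 i (gammaC he ((r + s).unop) * z)
          + hmapBig he ι N m.1 i (tmul he (tauT he ((r + s).unop)) z)
          = ((r • m) + (s • m)).2 i z
      rw [show ((r + s)).unop = r.unop + s.unop from rfl, gammaC_add he, tauT_add he]
      have h1 : (gammaC he r.unop + gammaC he s.unop) * z
          = gammaC he r.unop * z + gammaC he s.unop * z := add_mul _ _ _
      have h2 : tmul he (tauT he r.unop + tauT he s.unop) z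
          = tmul he (tauT he r.unop) z + tmul he (tauT he s.unop) z := tmul_add_left he _ _ _
      rw [h1, h2, map_add, map_add]
      show _ = ((r • m).2 + (s • m).2) i z
      show _ = (r • m).2 i z + (s • m).2 i z
      rw [smul_snd, smul_snd]
      abel
  zero_smul m := by
    refine Prod.ext ?_ ?_
    · rw [smul_fst, zero_fst]
      show op (beta he ((0 : Aᵐᵒᵖ).unop)) • m.1 = 0
      rw [show ((0 : Aᵐᵒᵖ)).unop = (0 : A) from rfl, beta_zero he, op_zero, zero_smul]
    · funext i
      ext z
      rw [smul_snd, zero_snd]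
      rw [show ((0 : Aᵐᵒᵖ)).unop = (0 : A) from rfl, gammaC_zero he, tauT_zero he,
        zero_mul, map_zero, tmul_zero_left he, map_zero, add_zero]
      rfl

lemma tmul_one (t : LTrap A e he) : tmul he t 1 = t := Subtype.ext <| by
  show t.1 * ((1 : CornerRing A e he)).1 = t.1
  rw [show ((1 : CornerRing A e he)).1 = e from rfl]
  exact LTrap.ltrap_right t.2 he

lemma mem_rAnn_bigMod (I : Ideal A)
    (hIset : (I : Set A) = {x : A | ∃ a : A, x = a * e})
    (m : BigMod he ι N htwo) :
    m ∈ rAnn A I (BigMod he ι N htwo) ↔ hmapBig he ι N m.1 = 0 ∧ m.2 = 0 := by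
  have he_mem : e ∈ I := by
    have : e ∈ (I : Set A) := by rw [hIset]; exact ⟨1, (one_mul e).symm⟩
    exact this
  constructor
  · intro h
    have h2 : m.2 = 0 := by
      have he0 := h e he_mem
      funext i
      ext z
      have hz := congrArg (fun w : BigMod he ι N htwo => w.2 i z) he0
      replace hz : (op e • m).2 i z = (0 : BigMod he ι N htwo).2 i z := hz
      rw [BigMod.smul_snd] at hz
      rw [show ((op e)).unop = e from rfl, gammaC_e he, one_mul, tauT_e he,
        tmul_zero_left he, map_zero, add_zero] at hz
      rw [hz]
      rw [show ((0 : BigMod he ι N htwo)).2 i z = 0 from rfl]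
      rfl
    refine ⟨?_, h2⟩
    funext i
    ext t
    have ht : t.1 ∈ I := by
      have : t.1 ∈ (I : Set A) := by rw [hIset]; exact ⟨(1 - e) * t.1, t.2.symm⟩
      exact this
    have h3 := h t.1 ht
    have hz := congrArg (fun w : BigMod he ι N htwo => w.2 i 1) h3
    replace hz : (op t.1 • m).2 i 1 = (0 : BigMod he ι N htwo).2 i 1 := hz
    rw [BigMod.smul_snd] at hz
    rw [show ((op t.1)).unop = t.1 from rfl, tauT_trap he, tmul_one he, h2] at hz
    rw [show ((0 : ι → CharacterModule (CornerRing A e he)) i)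
        (gammaC he t.1 * 1) = 0 from rfl, zero_add] at hz
    rw [hz]
    rw [show ((0 : BigMod he ι N htwo)).2 i 1 = 0 from rfl]
    rfl
  · rintro ⟨h1, h2⟩ s hs
    have : s ∈ (I : Set A) := hs
    rw [hIset] at this
    obtain ⟨a, rfl⟩ := this
    refine Prod.ext ?_ ?_
    · rw [BigMod.smul_fst]
      rw [show ((op (a * e))).unop = a * e from rfl, beta_ae he, op_zero, zero_smul]
      rfl
    · funext i
      ext z
      rw [BigMod.smul_snd]
      rw [show ((op (a * e))).unop = a * e from rfl, h2, h1]
      rw [show ((0 : ι → CharacterModule (CornerRing A e he)) i)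
          (gammaC he (a * e) * z) = 0 from rfl]
      rw [show ((0 : ι → CharacterModule (LTrap A e he)) i)
          (tmul he (tauT he (a * e)) z) = 0 from rfl, add_zero]
      rfl


/-- The candidate complement inside the free module. -/
def Xcomp (N'' : Submodule Aᵐᵒᵖ (BigMod he ι N htwo)) :
    Submodule (CornerRing A (1 - e) (one_sub_idem he))ᵐᵒᵖ
      (↥N →₀ (CornerRing A (1 - e) (one_sub_idem he))ᵐᵒᵖ) where
  carrier := {x | BigMod.mk he htwo ι N x 0 ∈ N''}
  add_mem' := by
    intro x y hx hy
    have hxy : BigMod.mk he htwo ι N (x + y) 0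
        = BigMod.mk he htwo ι N x 0 + BigMod.mk he htwo ι N y 0 := by
      refine Prod.ext rfl ?_
      show (0 : ι → CharacterModule (CornerRing A e he)) = 0 + 0
      rw [add_zero]
    show BigMod.mk he htwo ι N (x + y) 0 ∈ N''
    rw [hxy]
    exact N''.add_mem hx hy
  zero_mem' := by
    show BigMod.mk he htwo ι N 0 0 ∈ N''
    exact N''.zero_mem
  smul_mem' := by
    intro c x hx
    show BigMod.mk he htwo ι N (c • x) 0 ∈ N''
    have key : BigMod.mk he htwo ι N (c • x) 0
        = op (c.unop.1) • BigMod.mk he htwo ι N x 0 := by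
      refine Prod.ext ?_ ?_
      · rw [BigMod.smul_fst]
        rw [show ((op (c.unop.1))).unop = c.unop.1 from rfl, beta_corner he c.unop,
          op_unop]
        rfl
      · funext i
        ext z
        rw [BigMod.smul_snd]
        rw [show ((op (c.unop.1))).unop = c.unop.1 from rfl, tauT_corner he c.unop,
          tmul_zero_left he, map_zero, add_zero]
        rfl
    rw [key]
    exact N''.smul_mem _ hx

set_option maxHeartbeats 1600000 in
lemma proj_of_summand (htwo' : ∀ a : A, e * a * e = e * a) (I : Ideal A)
    (hIset : (I : Set A) = {x : A | ∃ a : A, x = a * e})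
    (hsum : ∀ (M : Type) [AddCommGroup M] [Module Aᵐᵒᵖ M],
        ∃ N' : Submodule Aᵐᵒᵖ M, rAnn A I M ⊓ N' = ⊥ ∧ rAnn A I M ⊔ N' = ⊤) :
    Module.Projective (CornerRing A (1 - e) (one_sub_idem he))ᵐᵒᵖ N := by
  classical
  obtain ⟨N'', hbot, htop⟩ := hsum (BigMod he ι N htwo')
  set π : (↥N →₀ (CornerRing A (1 - e) (one_sub_idem he))ᵐᵒᵖ)
      →ₗ[(CornerRing A (1 - e) (one_sub_idem he))ᵐᵒᵖ] ↥N :=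
    Finsupp.linearCombination _ id with hπdef
  have hπsurj : Function.Surjective π := by
    intro n
    refine ⟨Finsupp.single n 1, ?_⟩
    rw [hπdef, Finsupp.linearCombination_single, one_smul]
    rfl
  have hhm : ∀ x, hmapBig he ι N x = ((π x : ↥N) : ι → CharacterModule (LTrap A e he)) :=
    fun _ => rfl
  have hmap0 : ∀ x, hmapBig he ι N x = 0 ↔ π x = 0 := by
    intro x
    rw [hhm]
    constructor
    · intro h; exact Subtype.ext h
    · intro h; rw [h]; rfl
  set X' := Xcomp he htwo' ι N N'' with hX'def
  have hXbot : ∀ x, π x = 0 → x ∈ X' → x = 0 := by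
    intro x hx hx'
    have hmem : BigMod.mk he htwo' ι N x 0 ∈ rAnn A I (BigMod he ι N htwo') ⊓ N'' := by
      rw [Submodule.mem_inf]
      refine ⟨?_, hx'⟩
      rw [mem_rAnn_bigMod he htwo' ι N I hIset]
      exact ⟨(hmap0 x).2 hx, rfl⟩
    rw [hbot, Submodule.mem_bot] at hmem
    exact congrArg Prod.fst hmem
  have hXsup : ∀ x, ∃ k x', π k = 0 ∧ x' ∈ X' ∧ x = k + x' := by
    intro x
    have hmem : BigMod.mk he htwo' ι N x 0 ∈ rAnn A I (BigMod he ι N htwo') ⊔ N'' :=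
      htop ▸ Submodule.mem_top
    obtain ⟨u, hu, v, hv, huv⟩ := Submodule.mem_sup.1 hmem
    rw [mem_rAnn_bigMod he htwo' ι N I hIset] at hu
    have hv2 : v.2 = 0 := by
      have := congrArg Prod.snd huv
      rw [BigMod.add_snd] at this
      rw [hu.2, zero_add] at this
      exact this
    have hveq : v = BigMod.mk he htwo' ι N v.1 0 := by
      refine Prod.ext rfl ?_
      exact hv2
    refine ⟨u.1, v.1, (hmap0 u.1).1 hu.1, ?_, ?_⟩
    · show BigMod.mk he htwo' ι N v.1 0 ∈ N''
      rw [← hveq]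
      exact hv
    · have := congrArg Prod.fst huv
      rw [BigMod.add_fst] at this
      exact this.symm
  set φ := π.comp X'.subtype with hφdef
  have hφval : ∀ x' : X', φ x' = π x'.1 := fun _ => rfl
  have hinj : Function.Injective φ := by
    intro u v huv
    have heq : π u.1 = π v.1 := by rw [← hφval, ← hφval, huv]
    have hsub : π (u.1 - v.1) = 0 := by rw [map_sub, heq, sub_self]
    have hmem : (u.1 - v.1) ∈ X' := X'.sub_mem u.2 v.2
    have h0 := hXbot _ hsub hmem
    exact Subtype.ext (sub_eq_zero.1 h0)
  have hsurj : Function.Surjective φ := by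
    intro n
    obtain ⟨x, hx⟩ := hπsurj n
    obtain ⟨k, x', hk, hx', hxe⟩ := hXsup x
    refine ⟨⟨x', hx'⟩, ?_⟩
    have hsum2 : π x = π k + π x' := by rw [hxe, map_add]
    rw [hk, zero_add] at hsum2
    rw [hφval, ← hsum2, hx]
  let equiv := LinearEquiv.ofBijective φ ⟨hinj, hsurj⟩
  have hcomp : π.comp (X'.subtype.comp equiv.symm.toLinearMap) = LinearMap.id := by
    apply LinearMap.ext
    intro n
    show π ((equiv.symm n : ↥X') : ↥N →₀ (CornerRing A (1 - e) (one_sub_idem he))ᵐᵒᵖ) = n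
    exact equiv.apply_symm_apply n
  exact Module.Projective.of_split (X'.subtype.comp equiv.symm.toLinearMap) π hcomp

end BigMod

end BigMod

end Stmt10

end Proof10


/-- for a two-sided idempotent ideal `I` of `A` the following are
equivalent:
(1) `ann_M(I)` is a direct summand of every right `A`-module and `I` is finitely
generated as a left ideal;
(2) there is an idempotent `e` with `I = Ae` such that, for `B := (1-e)A(1-e)` and the
left `B`-module `M := (1-e)Ae`, the character module `Hom_ℤ((1-e)Ae, ℚ/ℤ)` is hereditary
`Π`-projective as a right `B`-module. -/
theorem stmt_10 (I : Ideal A)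
    (hright : ∀ a ∈ I, ∀ b : A, a * b ∈ I)
    (hidem : ∀ a ∈ I, a ∈ AddSubgroup.closure {x : A | ∃ b ∈ I, ∃ c ∈ I, x = b * c}) :
    ((∀ (M : Type) [AddCommGroup M] [Module Aᵐᵒᵖ M],
        ∃ N' : Submodule Aᵐᵒᵖ M, rAnn A I M ⊓ N' = ⊥ ∧ rAnn A I M ⊔ N' = ⊤) ∧ I.FG)
    ↔
    (∃ (e : A) (he : e * e = e),
      (I : Set A) = {x : A | ∃ a : A, x = a * e} ∧
      ∀ (ι : Type)
        (N : Submodule (CornerRing A (1 - e) (one_sub_idem he))ᵐᵒᵖ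
          (ι → CharacterModule (LTrap A e he))),
        Module.Projective (CornerRing A (1 - e) (one_sub_idem he))ᵐᵒᵖ N) := by
  constructor
  · rintro ⟨hsum, hfg⟩
    obtain ⟨e, heI, he, hIset⟩ := Stmt10.exists_idem I hright hidem hsum hfg
    have htwo : ∀ a : A, e * a * e = e * a := by
      intro a
      have h1 : e * a ∈ I := hright e heI a
      have h2 : e * a ∈ (I : Set A) := h1
      rw [hIset] at h2
      obtain ⟨c, hc⟩ := h2
      rw [hc, mul_assoc, he]
    exact ⟨e, he, hIset, fun ι N => Stmt10.BigMod.proj_of_summand he ι N htwo I hIset hsum⟩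
  · rintro ⟨e, he, hIset, hproj⟩
    have heI : e ∈ I := by
      have h : e ∈ (I : Set A) := by rw [hIset]; exact ⟨1, (one_mul e).symm⟩
      exact h
    have htwo : ∀ a : A, e * a * e = e * a := by
      intro a
      have h1 : e * a ∈ I := hright e heI a
      have h2 : e * a ∈ (I : Set A) := h1
      rw [hIset] at h2
      obtain ⟨c, hc⟩ := h2
      rw [hc, mul_assoc, he]
    constructor
    · intro M _ _
      exact Stmt10.summand_of_proj e he htwo I hIset hproj M
    · refine ⟨{e}, le_antisymm ?_ ?_⟩
      · rw [Ideal.span_le]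
        intro x hx
        rw [Finset.coe_singleton, Set.mem_singleton_iff] at hx
        rw [hx]
        exact heI
      · intro x hx
        have h2 : x ∈ (I : Set A) := hx
        rw [hIset] at h2
        obtain ⟨a, rfl⟩ := h2
        have h3 : e ∈ (Ideal.span ({e} : Finset A) : Ideal A) :=
          Ideal.subset_span (by simp)
        exact Ideal.mul_mem_left _ a h3
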